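/- Let n ≥ 3. The number of permutations π in S_n that avoid 123 as a consecutive pattern and satisfy ides(π) = 1 is 4 if n is odd and 5 if n is even. -/

import Mathlib

open Finset

/-- The 1-based word of values of a permutation `π ∈ S_n`: `val π i` is the value
(in `{1, …, n}`) of `π` at the 1-based position `i`, and `0` if `i` is out of range. -/
def pval {n : ℕ} (π : Equiv.Perm (Fin n)) (i : ℕ) : ℕ :=
  if h : 1 ≤ i ∧ i - 1 < n then (π ⟨i - 1, h.2⟩ : ℕ) + 1 else 0

/-- The descent set of `π ∈ S_n`: the set of `i ∈ [n-1]` with `π_i > π_{i+1}`. -/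
def desSet {n : ℕ} (π : Equiv.Perm (Fin n)) : Finset ℕ :=
  (Finset.Icc 1 (n - 1)).filter (fun i => pval π (i + 1) < pval π i)

/-- The descent number. -/
def des {n : ℕ} (π : Equiv.Perm (Fin n)) : ℕ := (desSet π).card

/-- The major index: the sum of the descents. -/
def maj {n : ℕ} (π : Equiv.Perm (Fin n)) : ℕ := ∑ i ∈ desSet π, i

/-- The comajor index: `comaj π = ∑_{i ∈ Des π} (n - i)`. -/
def comaj {n : ℕ} (π : Equiv.Perm (Fin n)) : ℕ := ∑ i ∈ desSet π, (n - i)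

/-- The peak number: the number of `i` with `2 ≤ i ≤ n-1` and `π_{i-1} < π_i > π_{i+1}`. -/
def pk {n : ℕ} (π : Equiv.Perm (Fin n)) : ℕ :=
  ((Finset.Icc 2 (n - 1)).filter
    (fun i => pval π (i - 1) < pval π i ∧ pval π (i + 1) < pval π i)).card

/-- The left peak number: the number of `i ∈ [n-1]` which are peaks of `π`, or `i = 1`
when `1` is a descent (equivalently, peaks of `0π`; note `pval π 0 = 0`). -/
def lpk {n : ℕ} (π : Equiv.Perm (Fin n)) : ℕ :=
  ((Finset.Icc 1 (n - 1)).filter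
    (fun i => pval π (i - 1) < pval π i ∧ pval π (i + 1) < pval π i)).card

/-- Inverse descent number. -/
def ides {n : ℕ} (π : Equiv.Perm (Fin n)) : ℕ := des π⁻¹

/-- Inverse major index. -/
def imaj {n : ℕ} (π : Equiv.Perm (Fin n)) : ℕ := maj π⁻¹

/-- Inverse comajor index. -/
def icomaj {n : ℕ} (π : Equiv.Perm (Fin n)) : ℕ := comaj π⁻¹

/-- Inverse peak number. -/
def ipk {n : ℕ} (π : Equiv.Perm (Fin n)) : ℕ := pk π⁻¹

/-- Inverse left peak number. -/
def ilpk {n : ℕ} (π : Equiv.Perm (Fin n)) : ℕ := lpk π⁻¹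

/-- The reverse `π^r` of `π`, with `(π^r)_i = π_{n+1-i}`. -/
def prev {n : ℕ} (π : Equiv.Perm (Fin n)) : Equiv.Perm (Fin n) :=
  (Fin.revPerm : Equiv.Perm (Fin n)).trans π

/-- The complement `π^c` of `π`, with `(π^c)_i = n + 1 - π_i`. -/
def pcomp {n : ℕ} (π : Equiv.Perm (Fin n)) : Equiv.Perm (Fin n) :=
  π.trans (Fin.revPerm : Equiv.Perm (Fin n))

/-- The reverse-complement `π^{rc} = (π^r)^c` of `π`. -/
def prc {n : ℕ} (π : Equiv.Perm (Fin n)) : Equiv.Perm (Fin n) := pcomp (prev π)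


/-- `π ∈ S_n` avoids `123` as a consecutive pattern: there is no (1-based) index `i`
with `π_i < π_{i+1} < π_{i+2}`. -/
def Avoids123 {n : ℕ} (π : Equiv.Perm (Fin n)) : Prop :=
  ∀ i : ℕ, 1 ≤ i → i + 2 ≤ n →
    ¬ (pval π i < pval π (i + 1) ∧ pval π (i + 1) < pval π (i + 2))

section basic
variable {n : ℕ}

lemma pval_eq (π : Equiv.Perm (Fin n)) {i : ℕ} (h1 : 1 ≤ i) (h2 : i ≤ n) :
    pval π i = (π ⟨i - 1, by omega⟩ : ℕ) + 1 := by
  unfold pval; rw [dif_pos ⟨h1, by omega⟩]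

lemma pval_one_le (π : Equiv.Perm (Fin n)) {i : ℕ} (h1 : 1 ≤ i) (h2 : i ≤ n) :
    1 ≤ pval π i := by rw [pval_eq π h1 h2]; omega

lemma pval_le (π : Equiv.Perm (Fin n)) {i : ℕ} (h1 : 1 ≤ i) (h2 : i ≤ n) :
    pval π i ≤ n := by
  rw [pval_eq π h1 h2]
  have := (π ⟨i - 1, by omega⟩).isLt; omega

lemma pval_inv_pval (π : Equiv.Perm (Fin n)) {i : ℕ} (h1 : 1 ≤ i) (h2 : i ≤ n) :
    pval π⁻¹ (pval π i) = i := by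
  have hb1 := pval_one_le π h1 h2
  have hb2 := pval_le π h1 h2
  rw [pval_eq π⁻¹ hb1 hb2]
  have : (⟨pval π i - 1, by omega⟩ : Fin n) = π ⟨i - 1, by omega⟩ := by
    apply Fin.ext
    have h3 := pval_eq π h1 h2
    simp only [Fin.val_mk]
    omega
  rw [this, ← Equiv.Perm.mul_apply, inv_mul_cancel, Equiv.Perm.one_apply]
  simp; omega

lemma pval_pval_inv (π : Equiv.Perm (Fin n)) {v : ℕ} (h1 : 1 ≤ v) (h2 : v ≤ n) :
    pval π (pval π⁻¹ v) = v := by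
  have := pval_inv_pval π⁻¹ h1 h2
  rwa [inv_inv] at this

lemma pval_injOn (π : Equiv.Perm (Fin n)) {i j : ℕ} (hi1 : 1 ≤ i) (hi2 : i ≤ n)
    (hj1 : 1 ≤ j) (hj2 : j ≤ n) (h : pval π i = pval π j) : i = j := by
  have := pval_inv_pval π hi1 hi2
  rw [h, pval_inv_pval π hj1 hj2] at this
  omega

lemma perm_ext_of_pval (π π' : Equiv.Perm (Fin n))
    (h : ∀ i, 1 ≤ i → i ≤ n → pval π i = pval π' i) : π = π' := by
  apply Equiv.ext
  intro x
  have hx := x.isLt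
  have := h (x.val + 1) (by omega) (by omega)
  rw [pval_eq π (by omega) (by omega), pval_eq π' (by omega) (by omega)] at this
  have hxx : (⟨x.val + 1 - 1, by omega⟩ : Fin n) = x := by apply Fin.ext; simp
  rw [hxx] at this
  exact Fin.ext (by omega)

end basic


section word
variable (w : ℕ → Bool)

/-- number of `true`s among positions `1..i`. -/
def wct (i : ℕ) : ℕ := ((Finset.Icc 1 i).filter (fun j => w j = true)).card

/-- number of `false`s among positions `1..i`. -/
def wcf (i : ℕ) : ℕ := ((Finset.Icc 1 i).filter (fun j => w j = false)).card

lemma wct_mono {i j : ℕ} (h : i ≤ j) : wct w i ≤ wct w j :=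
  Finset.card_le_card (Finset.filter_subset_filter _ (Finset.Icc_subset_Icc le_rfl h))

lemma wcf_mono {i j : ℕ} (h : i ≤ j) : wcf w i ≤ wcf w j :=
  Finset.card_le_card (Finset.filter_subset_filter _ (Finset.Icc_subset_Icc le_rfl h))

lemma wct_pos {i : ℕ} (h1 : 1 ≤ i) (h : w i = true) : 1 ≤ wct w i := by
  apply Finset.card_pos.mpr
  exact ⟨i, Finset.mem_filter.mpr ⟨Finset.mem_Icc.mpr ⟨h1, le_rfl⟩, h⟩⟩

lemma wcf_pos {i : ℕ} (h1 : 1 ≤ i) (h : w i = false) : 1 ≤ wcf w i := by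
  apply Finset.card_pos.mpr
  exact ⟨i, Finset.mem_filter.mpr ⟨Finset.mem_Icc.mpr ⟨h1, le_rfl⟩, h⟩⟩

lemma wct_lt {i j : ℕ} (h : i < j) (hw : w j = true) : wct w i < wct w j := by
  apply Finset.card_lt_card
  constructor
  · exact Finset.filter_subset_filter _ (Finset.Icc_subset_Icc le_rfl (le_of_lt h))
  · intro hsub
    have hj : j ∈ (Finset.Icc 1 j).filter (fun j => w j = true) :=
      Finset.mem_filter.mpr ⟨Finset.mem_Icc.mpr ⟨by omega, le_rfl⟩, hw⟩
    have := hsub hj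
    rw [Finset.mem_filter, Finset.mem_Icc] at this
    omega

lemma wcf_lt {i j : ℕ} (h : i < j) (hw : w j = false) : wcf w i < wcf w j := by
  apply Finset.card_lt_card
  constructor
  · exact Finset.filter_subset_filter _ (Finset.Icc_subset_Icc le_rfl (le_of_lt h))
  · intro hsub
    have hj : j ∈ (Finset.Icc 1 j).filter (fun j => w j = false) :=
      Finset.mem_filter.mpr ⟨Finset.mem_Icc.mpr ⟨by omega, le_rfl⟩, hw⟩
    have := hsub hj
    rw [Finset.mem_filter, Finset.mem_Icc] at this
    omega

lemma wct_add_wcf (i : ℕ) : wct w i + wcf w i = i := by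
  unfold wct wcf
  have : (Finset.Icc 1 i).filter (fun j => w j = false)
      = (Finset.Icc 1 i).filter (fun j => ¬ (w j = true)) := by
    apply Finset.filter_congr; intro j _; simp
  rw [this, Finset.card_filter_add_card_filter_not]
  simp

variable {n : ℕ}

/-- the underlying function of the permutation associated to a word. -/
def wfun (i : Fin n) : Fin n :=
  ⟨(if w (i.val + 1) = true then wct w (i.val + 1) else wct w n + wcf w (i.val + 1)) - 1, by
    have hin : (i.val + 1) ≤ n := i.isLt
    split
    · have h1 := wct_pos w (i := i.val + 1) (by omega) (by assumption)
      have h2 : wct w (i.val + 1) ≤ wct w n := wct_mono w hin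
      have h3 : wct w n + wcf w n = n := wct_add_wcf w n
      omega
    · rename_i hw
      have h1 := wcf_pos w (i := i.val + 1) (by omega) (by simpa using hw)
      have h2 : wcf w (i.val + 1) ≤ wcf w n := wcf_mono w hin
      have h3 : wct w n + wcf w n = n := wct_add_wcf w n
      omega⟩

lemma wfun_inj : Function.Injective (wfun w (n := n)) := by
  have key : ∀ i j : Fin n, i.val < j.val → wfun w i ≠ wfun w j := by
    intro i j hij heq
    have hi : (i.val + 1) ≤ n := i.isLt
    have hj : (j.val + 1) ≤ n := j.isLt
    have hsum : wct w n + wcf w n = n := wct_add_wcf w n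
    have hv := congrArg Fin.val heq
    simp only [wfun] at hv
    rcases hwi : w (i.val + 1) <;> rcases hwj : w (j.val + 1) <;>
      rw [hwi, hwj] at hv <;> simp at hv
    · -- both false
      have := wcf_lt w (show i.val + 1 < j.val + 1 by omega) hwj
      have := wcf_pos w (i := i.val + 1) (by omega) hwi
      omega
    · -- i false, j true
      have h1 := wcf_pos w (i := i.val + 1) (by omega) hwi
      have h2 : wct w (j.val + 1) ≤ wct w n := wct_mono w hj
      have h3 := wct_pos w (i := j.val + 1) (by omega) hwj
      omega
    · -- i true, j false
      have h1 := wcf_pos w (i := j.val + 1) (by omega) hwj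
      have h2 : wct w (i.val + 1) ≤ wct w n := wct_mono w hi
      have h3 := wct_pos w (i := i.val + 1) (by omega) hwi
      omega
    · -- both true
      have := wct_lt w (show i.val + 1 < j.val + 1 by omega) hwj
      have := wct_pos w (i := i.val + 1) (by omega) hwi
      omega
  intro i j heq
  by_contra hne
  rcases Nat.lt_or_ge i.val j.val with h | h
  · exact key i j h heq
  · have : j.val < i.val := by
      rcases Nat.lt_or_ge j.val i.val with h' | h'
      · exact h'
      · exact absurd (Fin.ext (by omega)) hne
    exact key j i this heq.symm

/-- the permutation associated to a word. -/
noncomputable def pow : Equiv.Perm (Fin n) :=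
  Equiv.ofBijective (wfun w) ((Finite.injective_iff_bijective).mp (wfun_inj w))

lemma pval_pow {i : ℕ} (h1 : 1 ≤ i) (h2 : i ≤ n) :
    pval (pow w (n := n)) i =
      if w i = true then wct w i else wct w n + wcf w i := by
  rw [pval_eq _ h1 h2]
  have : (pow w (n := n)) ⟨i - 1, by omega⟩ = wfun w ⟨i - 1, by omega⟩ := rfl
  rw [this]
  simp only [wfun]
  have he : i - 1 + 1 = i := by omega
  rw [he]
  have hsum : wct w n + wcf w n = n := wct_add_wcf w n
  split
  · rename_i hw
    have := wct_pos w h1 hw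
    omega
  · rename_i hw
    have := wcf_pos w h1 (by simpa using hw)
    omega

end word

section exist
variable {n : ℕ} {w : ℕ → Bool} {r : ℕ}

lemma pval_pow_le_iff {i : ℕ} (hi1 : 1 ≤ i) (hi2 : i ≤ n) :
    pval (pow w (n := n)) i ≤ wct w n ↔ w i = true := by
  rw [pval_pow w hi1 hi2]
  rcases hw : w i
  · have := wcf_pos w hi1 hw
    simp; omega
  · simp
    exact wct_mono w hi2

/-- descent characterization for `pow w` -/
lemma pow_desc_iff {i : ℕ} (hi1 : 1 ≤ i) (hi2 : i + 1 ≤ n) :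
    pval (pow w (n := n)) (i + 1) < pval (pow w (n := n)) i ↔
      (w i = false ∧ w (i + 1) = true) := by
  have hs : wct w n + wcf w n = n := wct_add_wcf w n
  rw [pval_pow w hi1 (by omega), pval_pow w (by omega) hi2]
  rcases hwi : w i <;> rcases hwj : w (i + 1)
  · simp only [Bool.false_eq_true, if_neg, if_false]
    have := wcf_lt w (show i < i + 1 by omega) hwj
    simp; omega
  · simp only [Bool.false_eq_true, if_neg, if_false, if_pos]
    have h1 := wct_mono w hi2
    have h2 := wcf_pos w hi1 hwi
    simp; omega
  · simp only [Bool.false_eq_true, if_neg, if_false, if_pos]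
    have h1 := wct_mono w (show i ≤ n by omega)
    have h2 := wcf_pos w (show (1:ℕ) ≤ i + 1 by omega) hwj
    simp; omega
  · simp only [if_pos]
    have := wct_lt w (show i < i + 1 by omega) hwj
    simp; omega

variable (hn : 3 ≤ n)
  (hr : ∀ i, 1 ≤ i → i ≤ n - 1 → i % 2 = r % 2 → w i = false ∧ w (i + 1) = true)

include hn hr

lemma pow_exists_i0 : ∃ i0, (1 ≤ i0 ∧ i0 ≤ n - 1 ∧ i0 % 2 = r % 2)
    ∧ w i0 = false ∧ w (i0 + 1) = true := by
  obtain ⟨i0, h1, h2, h3⟩ : ∃ i0, 1 ≤ i0 ∧ i0 ≤ n - 1 ∧ i0 % 2 = r % 2 := by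
    rcases Nat.mod_two_eq_zero_or_one r with he | ho
    · exact ⟨2, by omega, by omega, by omega⟩
    · exact ⟨1, by omega, by omega, by omega⟩
  exact ⟨i0, ⟨h1, h2, h3⟩, hr i0 h1 h2 h3⟩

lemma pow_wct_ge : 1 ≤ wct w n := by
  obtain ⟨i0, ⟨h1, h2, h3⟩, hf, ht⟩ := pow_exists_i0 hn hr
  calc 1 ≤ wct w (i0 + 1) := wct_pos w (by omega) ht
    _ ≤ wct w n := wct_mono w (by omega)

lemma pow_wct_le : wct w n ≤ n - 1 := by
  obtain ⟨i0, ⟨h1, h2, h3⟩, hf, ht⟩ := pow_exists_i0 hn hr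
  have := wcf_pos w h1 hf
  have h5 : wcf w i0 ≤ wcf w n := wcf_mono w (by omega)
  have hs : wct w n + wcf w n = n := wct_add_wcf w n
  omega

lemma pow_avoids : Avoids123 (pow w (n := n)) := by
  intro i h1 h2 ⟨ha1, ha2⟩
  obtain ⟨j, hj1, hj2, hj3⟩ : ∃ j, (j = i ∨ j = i + 1) ∧ 1 ≤ j ∧ j % 2 = r % 2 := by
    rcases Nat.mod_two_eq_zero_or_one r with he | ho <;>
      rcases Nat.mod_two_eq_zero_or_one i with hie | hio
    · exact ⟨i, Or.inl rfl, by omega, by omega⟩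
    · exact ⟨i + 1, Or.inr rfl, by omega, by omega⟩
    · exact ⟨i + 1, Or.inr rfl, by omega, by omega⟩
    · exact ⟨i, Or.inl rfl, by omega, by omega⟩
  have hd := hr j hj2 (by omega) hj3
  have := (pow_desc_iff (n := n) (w := w) hj2 (by omega)).mpr hd
  rcases hj1 with rfl | rfl
  · omega
  · rw [show i + 1 + 1 = i + 2 from rfl] at this; omega

lemma pow_desSet : desSet (pow w (n := n))⁻¹ = {wct w n} := by
  have hk1 : 1 ≤ wct w n := pow_wct_ge hn hr
  have hk2 : wct w n ≤ n - 1 := pow_wct_le hn hr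
  have hs : wct w n + wcf w n = n := wct_add_wcf w n
  obtain ⟨i0, ⟨h01, h02, h03⟩, hf0, ht0⟩ := pow_exists_i0 hn hr
  ext v
  simp only [desSet, Finset.mem_filter, Finset.mem_Icc, Finset.mem_singleton]
  constructor
  · rintro ⟨⟨hv1, hv2⟩, hdes⟩
    by_contra hne
    set σ := (pow w (n := n))⁻¹ with hσ
    have hi := pval_one_le σ (i := v) (by omega) (by omega)
    have hi2 := pval_le σ (i := v) (by omega) (by omega)
    have hi' := pval_one_le σ (i := v + 1) (by omega) (by omega)
    have hi2' := pval_le σ (i := v + 1) (by omega) (by omega)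
    have hp : pval (pow w (n := n)) (pval σ v) = v := pval_pval_inv _ (by omega) (by omega)
    have hp' : pval (pow w (n := n)) (pval σ (v + 1)) = v + 1 :=
      pval_pval_inv _ (by omega) (by omega)
    rcases Nat.lt_or_ge v (wct w n) with hvk | hvk
    · -- v < k : both positions are true positions
      have hwv : w (pval σ v) = true :=
        (pval_pow_le_iff (w := w) hi hi2).mp (by omega)
      have hwv' : w (pval σ (v + 1)) = true :=
        (pval_pow_le_iff (w := w) hi' hi2').mp (by omega)
      rw [pval_pow w hi hi2, if_pos hwv] at hp
      rw [pval_pow w hi' hi2', if_pos hwv'] at hp'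
      rcases Nat.lt_or_ge (pval σ (v + 1)) (pval σ v) with hlt | hge
      · have := wct_mono w (show pval σ (v + 1) ≤ pval σ v by omega)
        omega
      · omega
    · have hvk' : wct w n + 1 ≤ v := by omega
      have hwv : w (pval σ v) = false := by
        rcases hw : w (pval σ v)
        · rfl
        · have := (pval_pow_le_iff (w := w) hi hi2).mpr hw
          omega
      have hwv' : w (pval σ (v + 1)) = false := by
        rcases hw : w (pval σ (v + 1))
        · rfl
        · have := (pval_pow_le_iff (w := w) hi' hi2').mpr hw
          omega
      rw [pval_pow w hi hi2, if_neg (by simp [hwv])] at hp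
      rw [pval_pow w hi' hi2', if_neg (by simp [hwv'])] at hp'
      rcases Nat.lt_or_ge (pval σ (v + 1)) (pval σ v) with hlt | hge
      · have := wcf_mono w (show pval σ (v + 1) ≤ pval σ v by omega)
        omega
      · omega
  · rintro rfl
    refine ⟨⟨hk1, hk2⟩, ?_⟩
    set σ := (pow w (n := n))⁻¹ with hσ
    have hi := pval_one_le σ (i := wct w n) (by omega) (by omega)
    have hi2 := pval_le σ (i := wct w n) (by omega) (by omega)
    have hi' := pval_one_le σ (i := wct w n + 1) (by omega) (by omega)
    have hi2' := pval_le σ (i := wct w n + 1) (by omega) (by omega)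
    have hp : pval (pow w (n := n)) (pval σ (wct w n)) = wct w n :=
      pval_pval_inv _ (by omega) (by omega)
    have hp' : pval (pow w (n := n)) (pval σ (wct w n + 1)) = wct w n + 1 :=
      pval_pval_inv _ (by omega) (by omega)
    have hwv : w (pval σ (wct w n)) = true :=
      (pval_pow_le_iff (w := w) hi hi2).mp (by omega)
    have hwv' : w (pval σ (wct w n + 1)) = false := by
      rcases hw : w (pval σ (wct w n + 1))
      · rfl
      · have := (pval_pow_le_iff (w := w) hi' hi2').mpr hw
        omega
    rw [pval_pow w hi hi2, if_pos hwv] at hp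
    rw [pval_pow w hi' hi2', if_neg (by simp [hwv'])] at hp'
    have hle1 : pval σ (wct w n + 1) ≤ i0 := by
      by_contra hgt
      have := wcf_lt w (show i0 < pval σ (wct w n + 1) by omega) hwv'
      have := wcf_pos w h01 hf0
      omega
    have hle2 : i0 + 1 ≤ pval σ (wct w n) := by
      by_contra hlt
      have := wct_lt w (show pval σ (wct w n) < i0 + 1 by omega) ht0
      have := wct_mono w (show i0 + 1 ≤ n by omega)
      omega
    omega

lemma pow_ides : ides (pow w (n := n)) = 1 := by
  unfold ides des
  rw [pow_desSet hn hr]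
  simp

end exist

section unique
variable {n : ℕ} (π : Equiv.Perm (Fin n)) {k : ℕ}

lemma card_pval_le (hk : k ≤ n) :
    ((Finset.Icc 1 n).filter (fun j => pval π j ≤ k)).card = k := by
  have h : ((Finset.Icc 1 n).filter (fun j => pval π j ≤ k)).card
      = (Finset.Icc 1 k).card := by
    apply Finset.card_bij (fun j _ => pval π j)
    · intro a ha
      rw [Finset.mem_filter, Finset.mem_Icc] at ha
      rw [Finset.mem_Icc]
      exact ⟨pval_one_le π ha.1.1 ha.1.2, ha.2⟩
    · intro a ha b hb hab
      rw [Finset.mem_filter, Finset.mem_Icc] at ha hb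
      exact pval_injOn π ha.1.1 ha.1.2 hb.1.1 hb.1.2 hab
    · intro b hb
      rw [Finset.mem_Icc] at hb
      have hb2 : b ≤ n := le_trans hb.2 hk
      have hpb := pval_pval_inv π hb.1 hb2
      refine ⟨pval π⁻¹ b, ?_, hpb⟩
      rw [Finset.mem_filter, Finset.mem_Icc]
      exact ⟨⟨pval_one_le π⁻¹ hb.1 hb2, pval_le π⁻¹ hb.1 hb2⟩, by omega⟩
  rw [h, Nat.card_Icc]
  omega

variable {π}

/-- `same class implies increasing positions` hypothesis -/
def SC (π : Equiv.Perm (Fin n)) (k : ℕ) : Prop :=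
  ∀ i j, 1 ≤ i → i < j → j ≤ n → ((pval π i ≤ k) ↔ (pval π j ≤ k)) → pval π i < pval π j

lemma val_formula (hC1 : SC π k) (hk : k ≤ n) {i : ℕ} (h1 : 1 ≤ i) (h2 : i ≤ n) :
    pval π i = if pval π i ≤ k then ((Finset.Icc 1 i).filter (fun j => pval π j ≤ k)).card
      else k + ((Finset.Icc 1 i).filter (fun j => ¬ (pval π j ≤ k))).card := by
  have ha1 := pval_one_le π h1 h2
  have ha2 := pval_le π h1 h2
  by_cases hc : pval π i ≤ k
  · rw [if_pos hc]
    have h : ((Finset.Icc 1 i).filter (fun j => pval π j ≤ k)).card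
        = (Finset.Icc 1 (pval π i)).card := by
      apply Finset.card_bij (fun j _ => pval π j)
      · intro a ha
        rw [Finset.mem_filter, Finset.mem_Icc] at ha
        rw [Finset.mem_Icc]
        refine ⟨pval_one_le π ha.1.1 (by omega), ?_⟩
        rcases Nat.lt_or_ge a i with hai | hai
        · exact le_of_lt (hC1 a i ha.1.1 hai h2 (by constructor <;> intro <;> [exact hc; exact ha.2]))
        · have : a = i := by omega
          subst this; exact le_rfl
      · intro a ha b hb hab
        rw [Finset.mem_filter, Finset.mem_Icc] at ha hb
        exact pval_injOn π ha.1.1 (by omega) hb.1.1 (by omega) hab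
      · intro b hb
        rw [Finset.mem_Icc] at hb
        have hb2 : b ≤ n := by omega
        have hpb := pval_pval_inv π hb.1 hb2
        have hj1 := pval_one_le π⁻¹ hb.1 hb2
        have hj2 := pval_le π⁻¹ hb.1 hb2
        refine ⟨pval π⁻¹ b, ?_, hpb⟩
        rw [Finset.mem_filter, Finset.mem_Icc]
        have hji : pval π⁻¹ b ≤ i := by
          by_contra hgt
          have := hC1 i (pval π⁻¹ b) h1 (by omega) hj2
            (by rw [hpb]; constructor <;> intro <;> omega)
          omega
        exact ⟨⟨hj1, hji⟩, by omega⟩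
    rw [h, Nat.card_Icc]
    omega
  · rw [if_neg hc]
    have h : ((Finset.Icc 1 i).filter (fun j => ¬ (pval π j ≤ k))).card
        = (Finset.Icc 1 (pval π i - k)).card := by
      apply Finset.card_bij (fun j _ => pval π j - k)
      · intro a ha
        rw [Finset.mem_filter, Finset.mem_Icc] at ha
        rw [Finset.mem_Icc]
        have hh1 := pval_one_le π ha.1.1 (by omega)
        refine ⟨by omega, ?_⟩
        rcases Nat.lt_or_ge a i with hai | hai
        · have := hC1 a i ha.1.1 hai h2 (by constructor <;> intro <;> omega)
          omega
        · have : a = i := by omega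
          subst this; omega
      · intro a ha b hb hab
        rw [Finset.mem_filter, Finset.mem_Icc] at ha hb
        have h1a := pval_one_le π ha.1.1 (by omega)
        have h1b := pval_one_le π hb.1.1 (by omega)
        exact pval_injOn π ha.1.1 (by omega) hb.1.1 (by omega) (by omega)
      · intro b hb
        rw [Finset.mem_Icc] at hb
        have hu1 : 1 ≤ k + b := by omega
        have hu2 : k + b ≤ n := by omega
        have hpb := pval_pval_inv π hu1 hu2
        have hj1 := pval_one_le π⁻¹ hu1 hu2
        have hj2 := pval_le π⁻¹ hu1 hu2
        refine ⟨pval π⁻¹ (k + b), ?_, by omega⟩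
        rw [Finset.mem_filter, Finset.mem_Icc]
        have hji : pval π⁻¹ (k + b) ≤ i := by
          by_contra hgt
          have := hC1 i (pval π⁻¹ (k + b)) h1 (by omega) hj2
            (by rw [hpb]; constructor <;> intro <;> omega)
          omega
        exact ⟨⟨hj1, hji⟩, by omega⟩
    rw [h, Nat.card_Icc]
    omega

lemma eq_pow_of_word (hC1 : SC π k) (hk : k ≤ n) (w : ℕ → Bool)
    (hw : ∀ i, 1 ≤ i → i ≤ n → (pval π i ≤ k ↔ w i = true)) : π = pow w := by
  have hkct : wct w n = k := by
    rw [← card_pval_le π hk]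
    unfold wct
    congr 1
    apply Finset.filter_congr
    intro j hj
    rw [Finset.mem_Icc] at hj
    exact (hw j hj.1 hj.2).symm
  apply perm_ext_of_pval
  intro i h1 h2
  rw [val_formula hC1 hk h1 h2, pval_pow w h1 h2, hkct]
  have hfil1 : (Finset.Icc 1 i).filter (fun j => pval π j ≤ k)
      = (Finset.Icc 1 i).filter (fun j => w j = true) := by
    apply Finset.filter_congr
    intro j hj
    rw [Finset.mem_Icc] at hj
    exact hw j hj.1 (by omega)
  have hfil2 : (Finset.Icc 1 i).filter (fun j => ¬ (pval π j ≤ k))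
      = (Finset.Icc 1 i).filter (fun j => w j = false) := by
    apply Finset.filter_congr
    intro j hj
    rw [Finset.mem_Icc] at hj
    have := hw j hj.1 (by omega)
    constructor
    · intro hnp
      rcases hwj : w j
      · rfl
      · exact absurd (this.mpr hwj) hnp
    · intro hf hp
      have h2 := this.mp hp
      rw [hf] at h2
      cases h2
  rw [hfil1, hfil2]
  by_cases hc : pval π i ≤ k
  · rw [if_pos hc, if_pos ((hw i h1 h2).mp hc)]
    rfl
  · rw [if_neg hc, if_neg (fun ht => hc ((hw i h1 h2).mpr ht))]
    rfl
end unique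

def wA : ℕ → Bool := fun i => decide (i % 2 = 0)
def wAn (n : ℕ) : ℕ → Bool := fun i => decide (i % 2 = 0 ∨ i = n)
def wB : ℕ → Bool := fun i => decide (i % 2 = 1)
def wB0 : ℕ → Bool := fun i => decide (i % 2 = 1 ∧ i ≠ 1)
def wBn (n : ℕ) : ℕ → Bool := fun i => decide (i % 2 = 1 ∨ i = n)
def wB0n (n : ℕ) : ℕ → Bool := fun i => decide ((i % 2 = 1 ∧ i ≠ 1) ∨ i = n)

section struct
variable {n : ℕ} {π : Equiv.Perm (Fin n)}

lemma struct_main (hn : 3 ≤ n) (hav : Avoids123 π) (hides : ides π = 1) :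
    ∃ w : ℕ → Bool, π = pow w ∧
      (w = wA ∨ (n % 2 = 1 ∧ w = wAn n) ∨ w = wB ∨ w = wB0 ∨
        (n % 2 = 0 ∧ w = wBn n) ∨ (n % 2 = 0 ∧ w = wB0n n)) := by
  obtain ⟨k, hdes⟩ := (Finset.card_eq_one (s := desSet π⁻¹)).mp hides
  have hkmem : k ∈ desSet π⁻¹ := by rw [hdes]; exact Finset.mem_singleton_self k
  rw [desSet, Finset.mem_filter, Finset.mem_Icc] at hkmem
  obtain ⟨⟨hk1, hk2⟩, hdesk⟩ := hkmem
  -- ascents of the inverse away from k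
  have hasc : ∀ j, 1 ≤ j → j ≤ n - 1 → j ≠ k → pval π⁻¹ j < pval π⁻¹ (j + 1) := by
    intro j h1 h2 hne
    have hnotmem : j ∉ desSet π⁻¹ := by rw [hdes]; simp [hne]
    rw [desSet, Finset.mem_filter, Finset.mem_Icc] at hnotmem
    have hge : ¬ (pval π⁻¹ (j + 1) < pval π⁻¹ j) := fun hlt => hnotmem ⟨⟨h1, h2⟩, hlt⟩
    have hnee : pval π⁻¹ j ≠ pval π⁻¹ (j + 1) := by
      intro he
      have := pval_injOn π⁻¹ h1 (by omega) (show 1 ≤ j + 1 by omega) (by omega) he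
      omega
    omega
  -- monotone on low values
  have hmlow : ∀ d u, 1 ≤ u → u + d ≤ k → pval π⁻¹ u ≤ pval π⁻¹ (u + d) := by
    intro d
    induction d with
    | zero => intro u _ _; simp
    | succ d ih =>
      intro u hu hud
      have h1 := ih u hu (by omega)
      have h2 := hasc (u + d) (by omega) (by omega) (by omega)
      have he : u + (d + 1) = (u + d) + 1 := by omega
      rw [he]
      omega
  have hmhigh : ∀ d u, k + 1 ≤ u → u + d ≤ n → pval π⁻¹ u ≤ pval π⁻¹ (u + d) := by
    intro d
    induction d with
    | zero => intro u _ _; simp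
    | succ d ih =>
      intro u hu hud
      have h1 := ih u hu (by omega)
      have h2 := hasc (u + d) (by omega) (by omega) (by omega)
      have he : u + (d + 1) = (u + d) + 1 := by omega
      rw [he]
      omega
  -- same-class monotonicity
  have hC1 : SC π k := by
    intro i j h1 hij h2 hcl
    have hbi1 := pval_one_le π h1 (by omega)
    have hbi2 := pval_le π h1 (by omega)
    have hbj1 := pval_one_le π (show 1 ≤ j by omega) h2
    have hbj2 := pval_le π (show 1 ≤ j by omega) h2
    have hai := pval_inv_pval π h1 (by omega)
    have haj := pval_inv_pval π (show 1 ≤ j by omega) h2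
    by_contra hab
    have hba : pval π j ≤ pval π i := by omega
    rcases le_or_gt (pval π i) k with ha | ha
    · have hbk : pval π j ≤ k := hcl.mp ha
      have := hmlow (pval π i - pval π j) (pval π j) hbj1 (by omega)
      rw [show pval π j + (pval π i - pval π j) = pval π i by omega] at this
      rw [hai, haj] at this
      omega
    · have hbk : ¬ (pval π j ≤ k) := fun h => by have := hcl.mpr h; omega
      have := hmhigh (pval π i - pval π j) (pval π j) (by omega) (by omega)
      rw [show pval π j + (pval π i - pval π j) = pval π i by omega] at this
      rw [hai, haj] at this
      omega
  -- descent characterization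
  have hdesc_iff : ∀ i, 1 ≤ i → i + 1 ≤ n →
      (pval π (i + 1) < pval π i ↔ (k < pval π i ∧ pval π (i + 1) ≤ k)) := by
    intro i h1 h2
    constructor
    · intro hlt
      rcases le_or_gt (pval π i) k with ha | ha <;> rcases le_or_gt (pval π (i + 1)) k with hb | hb
      · have := hC1 i (i + 1) h1 (by omega) h2 (by constructor <;> intro <;> omega)
        omega
      · omega
      · exact ⟨ha, hb⟩
      · have := hC1 i (i + 1) h1 (by omega) h2 (by constructor <;> intro <;> omega)
        omega
    · intro ⟨ha, hb⟩; omega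
  -- the descent predicate on positions
  set D : ℕ → Prop := fun i => k < pval π i ∧ pval π (i + 1) ≤ k with hD
  have hwin : ∀ i, 1 ≤ i → i + 2 ≤ n → D i ∨ D (i + 1) := by
    intro i h1 h2
    have hnot := hav i h1 h2
    by_cases hasc1 : pval π i < pval π (i + 1)
    · right
      have hne2 : pval π (i + 1) ≠ pval π (i + 2) := by
        intro he
        have := pval_injOn π (show 1 ≤ i + 1 by omega) (by omega) (show 1 ≤ i + 2 by omega)
          (by omega) he
        omega
      have hlt : pval π (i + 1 + 1) < pval π (i + 1) := by
        rw [show i + 1 + 1 = i + 2 from rfl]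
        by_contra hge
        exact hnot ⟨hasc1, by omega⟩
      exact (hdesc_iff (i + 1) (by omega) (by omega)).mp hlt
    · left
      have hne1 : pval π i ≠ pval π (i + 1) := by
        intro he
        have := pval_injOn π h1 (by omega) (show 1 ≤ i + 1 by omega) (by omega) he
        omega
      exact (hdesc_iff i h1 (by omega)).mp (by omega)
  have halt : ∀ i, 1 ≤ i → i + 2 ≤ n → (D (i + 1) ↔ ¬ D i) := by
    intro i h1 h2
    constructor
    · intro hD1 hD0
      have := hD0.2
      have := hD1.1
      omega
    · intro hD0
      rcases hwin i h1 h2 with h | h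
      · exact absurd h hD0
      · exact h
  have hparity : ∀ i, 1 ≤ i → i ≤ n - 1 → ((D i ↔ D 1) ↔ i % 2 = 1) := by
    intro i hi
    induction i, hi using Nat.le_induction with
    | base => intro _; simp
    | succ i hi ih =>
      intro hin
      have h1 := halt i hi (by omega)
      have h2 := ih (by omega)
      rw [h1]
      by_cases hDi : D i <;> by_cases hD1 : D 1 <;>
        simp [hDi, hD1] at h2 ⊢ <;> omega
  have hDle : ∀ i, D i → (k < pval π i ∧ pval π (i + 1) ≤ k) := fun i h => h
  by_cases hD1 : D 1
  · -- case A : descents at odd positions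
    have hDodd : ∀ i, 1 ≤ i → i ≤ n - 1 → i % 2 = 1 → D i :=
      fun i h1 h2 h3 => ((hparity i h1 h2).mpr h3).mpr hD1
    have haodd : ∀ i, 1 ≤ i → i ≤ n - 1 → i % 2 = 1 → ¬ (pval π i ≤ k) := by
      intro i h1 h2 h3
      have := (hDodd i h1 h2 h3).1
      omega
    have haev : ∀ i, 2 ≤ i → i ≤ n → i % 2 = 0 → pval π i ≤ k := by
      intro i h1 h2 h3
      have hD := hDodd (i - 1) (by omega) (by omega) (by omega)
      have := hD.2
      rwa [show i - 1 + 1 = i by omega] at this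
    rcases Nat.mod_two_eq_zero_or_one n with hnp | hnp
    · -- n even : word is wA
      refine ⟨wA, ?_, Or.inl rfl⟩
      apply eq_pow_of_word hC1 (by omega) wA
      intro i h1 h2
      simp only [wA, decide_eq_true_eq]
      rcases Nat.mod_two_eq_zero_or_one i with h0 | h0
      · exact iff_of_true (haev i (by omega) h2 h0) h0
      · exact iff_of_false (haodd i h1 (by omega) h0) (by omega)
    · -- n odd
      by_cases hlast : pval π n ≤ k
      · refine ⟨wAn n, ?_, Or.inr (Or.inl ⟨hnp, rfl⟩)⟩
        apply eq_pow_of_word hC1 (by omega) (wAn n)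
        intro i h1 h2
        simp only [wAn, decide_eq_true_eq]
        rcases Nat.mod_two_eq_zero_or_one i with h0 | h0
        · exact iff_of_true (haev i (by omega) h2 h0) (Or.inl h0)
        · by_cases hin : i = n
          · subst hin; exact iff_of_true hlast (Or.inr rfl)
          · exact iff_of_false (haodd i h1 (by omega) h0) (by omega)
      · refine ⟨wA, ?_, Or.inl rfl⟩
        apply eq_pow_of_word hC1 (by omega) wA
        intro i h1 h2
        simp only [wA, decide_eq_true_eq]
        rcases Nat.mod_two_eq_zero_or_one i with h0 | h0
        · exact iff_of_true (haev i (by omega) h2 h0) h0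
        · by_cases hin : i = n
          · subst hin; exact iff_of_false hlast (by omega)
          · exact iff_of_false (haodd i h1 (by omega) h0) (by omega)
  · -- case B : descents at even positions
    have hDev : ∀ i, 1 ≤ i → i ≤ n - 1 → i % 2 = 0 → D i := by
      intro i h1 h2 h3
      by_contra hDi
      have := (hparity i h1 h2).mp (iff_of_false hDi hD1)
      omega
    have hbev : ∀ i, 1 ≤ i → i ≤ n - 1 → i % 2 = 0 → ¬ (pval π i ≤ k) := by
      intro i h1 h2 h3
      have := (hDev i h1 h2 h3).1
      omega
    have hbodd : ∀ i, 3 ≤ i → i ≤ n → i % 2 = 1 → pval π i ≤ k := by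
      intro i h1 h2 h3
      have hD := hDev (i - 1) (by omega) (by omega) (by omega)
      have := hD.2
      rwa [show i - 1 + 1 = i by omega] at this
    by_cases h1v : pval π 1 ≤ k
    · -- w 1 = true
      rcases Nat.mod_two_eq_zero_or_one n with hnp | hnp
      · -- n even: w n subcase
        by_cases hlast : pval π n ≤ k
        · refine ⟨wBn n, ?_, Or.inr (Or.inr (Or.inr (Or.inr (Or.inl ⟨hnp, rfl⟩))))⟩
          apply eq_pow_of_word hC1 (by omega) (wBn n)
          intro i h1 h2
          simp only [wBn, decide_eq_true_eq]
          rcases Nat.mod_two_eq_zero_or_one i with h0 | h0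
          · by_cases hin : i = n
            · subst hin; exact iff_of_true hlast (Or.inr rfl)
            · exact iff_of_false (hbev i h1 (by omega) h0) (by omega)
          · by_cases hi1 : i = 1
            · subst hi1; exact iff_of_true h1v (by omega)
            · exact iff_of_true (hbodd i (by omega) h2 h0) (Or.inl h0)
        · refine ⟨wB, ?_, Or.inr (Or.inr (Or.inl rfl))⟩
          apply eq_pow_of_word hC1 (by omega) wB
          intro i h1 h2
          simp only [wB, decide_eq_true_eq]
          rcases Nat.mod_two_eq_zero_or_one i with h0 | h0
          · by_cases hin : i = n
            · subst hin; exact iff_of_false hlast (by omega)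
            · exact iff_of_false (hbev i h1 (by omega) h0) (by omega)
          · by_cases hi1 : i = 1
            · subst hi1; exact iff_of_true h1v (by omega)
            · exact iff_of_true (hbodd i (by omega) h2 h0) h0
      · -- n odd : w = wB
        refine ⟨wB, ?_, Or.inr (Or.inr (Or.inl rfl))⟩
        apply eq_pow_of_word hC1 (by omega) wB
        intro i h1 h2
        simp only [wB, decide_eq_true_eq]
        rcases Nat.mod_two_eq_zero_or_one i with h0 | h0
        · exact iff_of_false (hbev i h1 (by omega) h0) (by omega)
        · by_cases hi1 : i = 1
          · subst hi1; exact iff_of_true h1v (by omega)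
          · exact iff_of_true (hbodd i (by omega) h2 h0) h0
    · -- w 1 = false
      rcases Nat.mod_two_eq_zero_or_one n with hnp | hnp
      · by_cases hlast : pval π n ≤ k
        · refine ⟨wB0n n, ?_, Or.inr (Or.inr (Or.inr (Or.inr (Or.inr ⟨hnp, rfl⟩))))⟩
          apply eq_pow_of_word hC1 (by omega) (wB0n n)
          intro i h1 h2
          simp only [wB0n, decide_eq_true_eq]
          rcases Nat.mod_two_eq_zero_or_one i with h0 | h0
          · by_cases hin : i = n
            · subst hin; exact iff_of_true hlast (Or.inr rfl)
            · exact iff_of_false (hbev i h1 (by omega) h0) (by omega)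
          · by_cases hi1 : i = 1
            · subst hi1; exact iff_of_false h1v (by omega)
            · exact iff_of_true (hbodd i (by omega) h2 h0) (Or.inl ⟨h0, hi1⟩)
        · refine ⟨wB0, ?_, Or.inr (Or.inr (Or.inr (Or.inl rfl)))⟩
          apply eq_pow_of_word hC1 (by omega) wB0
          intro i h1 h2
          simp only [wB0, decide_eq_true_eq]
          rcases Nat.mod_two_eq_zero_or_one i with h0 | h0
          · by_cases hin : i = n
            · subst hin; exact iff_of_false hlast (by omega)
            · exact iff_of_false (hbev i h1 (by omega) h0) (by omega)
          · by_cases hi1 : i = 1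
            · subst hi1; exact iff_of_false h1v (by omega)
            · exact iff_of_true (hbodd i (by omega) h2 h0) ⟨h0, hi1⟩
      · refine ⟨wB0, ?_, Or.inr (Or.inr (Or.inr (Or.inl rfl)))⟩
        apply eq_pow_of_word hC1 (by omega) wB0
        intro i h1 h2
        simp only [wB0, decide_eq_true_eq]
        rcases Nat.mod_two_eq_zero_or_one i with h0 | h0
        · exact iff_of_false (hbev i h1 (by omega) h0) (by omega)
        · by_cases hi1 : i = 1
          · subst hi1; exact iff_of_false h1v (by omega)
          · exact iff_of_true (hbodd i (by omega) h2 h0) ⟨h0, hi1⟩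

end struct

section words
variable {n : ℕ}

lemma hrA : ∀ i, 1 ≤ i → i ≤ n - 1 → i % 2 = 1 % 2 → wA i = false ∧ wA (i + 1) = true := by
  intro i h1 h2 h3
  simp only [wA, decide_eq_false_iff_not, decide_eq_true_eq]
  omega

lemma hrAn (hn : 3 ≤ n) :
    ∀ i, 1 ≤ i → i ≤ n - 1 → i % 2 = 1 % 2 → wAn n i = false ∧ wAn n (i + 1) = true := by
  intro i h1 h2 h3
  simp only [wAn, decide_eq_false_iff_not, decide_eq_true_eq]
  omega

lemma hrB : ∀ i, 1 ≤ i → i ≤ n - 1 → i % 2 = 2 % 2 → wB i = false ∧ wB (i + 1) = true := by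
  intro i h1 h2 h3
  simp only [wB, decide_eq_false_iff_not, decide_eq_true_eq]
  omega

lemma hrB0 : ∀ i, 1 ≤ i → i ≤ n - 1 → i % 2 = 2 % 2 → wB0 i = false ∧ wB0 (i + 1) = true := by
  intro i h1 h2 h3
  simp only [wB0, decide_eq_false_iff_not, decide_eq_true_eq]
  omega

lemma hrBn (hn : 3 ≤ n) :
    ∀ i, 1 ≤ i → i ≤ n - 1 → i % 2 = 2 % 2 → wBn n i = false ∧ wBn n (i + 1) = true := by
  intro i h1 h2 h3
  simp only [wBn, decide_eq_false_iff_not, decide_eq_true_eq]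
  omega

lemma hrB0n (hn : 3 ≤ n) :
    ∀ i, 1 ≤ i → i ≤ n - 1 → i % 2 = 2 % 2 → wB0n n i = false ∧ wB0n n (i + 1) = true := by
  intro i h1 h2 h3
  simp only [wB0n, decide_eq_false_iff_not, decide_eq_true_eq]
  omega

/-- distinctness of the permutations built from distinct admissible words. -/
lemma pow_ne (hn : 3 ≤ n) {w w' : ℕ → Bool} {r r' : ℕ}
    (hr : ∀ i, 1 ≤ i → i ≤ n - 1 → i % 2 = r % 2 → w i = false ∧ w (i + 1) = true)
    (hr' : ∀ i, 1 ≤ i → i ≤ n - 1 → i % 2 = r' % 2 → w' i = false ∧ w' (i + 1) = true)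
    {i0 : ℕ} (hi01 : 1 ≤ i0) (hi02 : i0 ≤ n) (hne : w i0 ≠ w' i0) :
    pow w (n := n) ≠ pow w' := by
  intro he
  have h1 := pow_desSet hn hr
  have h2 := pow_desSet hn hr'
  rw [he, h2] at h1
  have hk : wct w' n = wct w n := by
    have := Finset.mem_singleton.mp (h1 ▸ Finset.mem_singleton_self (wct w n))
    omega
  have e1 := pval_pow_le_iff (w := w) hi01 hi02
  have e2 := pval_pow_le_iff (w := w') hi01 hi02
  rw [← he, hk] at e2
  rcases hw : w i0 <;> rcases hw' : w' i0
  · exact hne (hw.trans hw'.symm)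
  · exact absurd (e1.mp (e2.mpr hw')) (by simp [hw])
  · exact absurd (e2.mp (e1.mpr hw)) (by simp [hw'])
  · exact hne (hw.trans hw'.symm)

end words

section main

lemma count_even {n : ℕ} (hn : 3 ≤ n) (hpar : n % 2 = 0) :
    Nat.card { π : Equiv.Perm (Fin n) // Avoids123 π ∧ ides π = 1 } = 5 := by
  classical
  set F : Finset (Equiv.Perm (Fin n)) :=
    {pow wA, pow wB, pow wB0, pow (wBn n), pow (wB0n n)} with hF
  have key : ∀ π : Equiv.Perm (Fin n), (Avoids123 π ∧ ides π = 1) ↔ π ∈ F := by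
    intro π
    constructor
    · rintro ⟨hav, hid⟩
      obtain ⟨w, rfl, hcase⟩ := struct_main hn hav hid
      rcases hcase with rfl | ⟨ho, _⟩ | rfl | rfl | ⟨_, rfl⟩ | ⟨_, rfl⟩
      · simp [hF, Finset.mem_insert]
      · exact absurd ho (by omega)
      · simp [hF, Finset.mem_insert]
      · simp [hF, Finset.mem_insert]
      · simp [hF, Finset.mem_insert]
      · simp [hF, Finset.mem_insert]
    · intro hmem
      simp only [hF, Finset.mem_insert, Finset.mem_singleton] at hmem
      rcases hmem with rfl | rfl | rfl | rfl | rfl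
      · exact ⟨pow_avoids hn hrA, pow_ides hn hrA⟩
      · exact ⟨pow_avoids hn hrB, pow_ides hn hrB⟩
      · exact ⟨pow_avoids hn hrB0, pow_ides hn hrB0⟩
      · exact ⟨pow_avoids hn (hrBn hn), pow_ides hn (hrBn hn)⟩
      · exact ⟨pow_avoids hn (hrB0n hn), pow_ides hn (hrB0n hn)⟩
  have e : { π : Equiv.Perm (Fin n) // Avoids123 π ∧ ides π = 1 } ≃ {π // π ∈ F} :=
    Equiv.subtypeEquivRight key
  rw [Nat.card_congr e, Nat.card_eq_fintype_card, Fintype.card_coe]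
  have nAB : pow wA (n := n) ≠ pow wB :=
    pow_ne hn hrA hrB (i0 := 1) (by omega) (by omega) (by simp [wA, wB])
  have nAB0 : pow wA (n := n) ≠ pow wB0 :=
    pow_ne hn hrA hrB0 (i0 := 2) (by omega) (by omega) (by simp [wA, wB0])
  have nABn : pow wA (n := n) ≠ pow (wBn n) :=
    pow_ne hn hrA (hrBn hn) (i0 := 1) (by omega) (by omega) (by simp [wA, wBn])
  have nAB0n : pow wA (n := n) ≠ pow (wB0n n) :=
    pow_ne hn hrA (hrB0n hn) (i0 := 2) (by omega) (by omega) (by simp [wA, wB0n]; omega)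
  have nBB0 : pow wB (n := n) ≠ pow wB0 :=
    pow_ne hn hrB hrB0 (i0 := 1) (by omega) (by omega) (by simp [wB, wB0])
  have nBBn : pow wB (n := n) ≠ pow (wBn n) :=
    pow_ne hn hrB (hrBn hn) (i0 := n) (by omega) (by omega) (by simp [wB, wBn]; omega)
  have nBB0n : pow wB (n := n) ≠ pow (wB0n n) :=
    pow_ne hn hrB (hrB0n hn) (i0 := 1) (by omega) (by omega) (by simp [wB, wB0n]; omega)
  have nB0Bn : pow wB0 (n := n) ≠ pow (wBn n) :=
    pow_ne hn hrB0 (hrBn hn) (i0 := 1) (by omega) (by omega) (by simp [wB0, wBn])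
  have nB0B0n : pow wB0 (n := n) ≠ pow (wB0n n) :=
    pow_ne hn hrB0 (hrB0n hn) (i0 := n) (by omega) (by omega) (by simp [wB0, wB0n]; omega)
  have nBnB0n : pow (wBn n) (n := n) ≠ pow (wB0n n) :=
    pow_ne hn (hrBn hn) (hrB0n hn) (i0 := 1) (by omega) (by omega)
      (by simp [wBn, wB0n]; omega)
  rw [hF]
  rw [Finset.card_insert_of_notMem (by
      simp only [Finset.mem_insert, Finset.mem_singleton]
      push_neg
      exact ⟨nAB, nAB0, nABn, nAB0n⟩),
    Finset.card_insert_of_notMem (by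
      simp only [Finset.mem_insert, Finset.mem_singleton]
      push_neg
      exact ⟨nBB0, nBBn, nBB0n⟩),
    Finset.card_insert_of_notMem (by
      simp only [Finset.mem_insert, Finset.mem_singleton]
      push_neg
      exact ⟨nB0Bn, nB0B0n⟩),
    Finset.card_insert_of_notMem (by
      simp only [Finset.mem_singleton]
      exact nBnB0n),
    Finset.card_singleton]

lemma count_odd {n : ℕ} (hn : 3 ≤ n) (hpar : n % 2 = 1) :
    Nat.card { π : Equiv.Perm (Fin n) // Avoids123 π ∧ ides π = 1 } = 4 := by
  classical
  set F : Finset (Equiv.Perm (Fin n)) :=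
    {pow wA, pow (wAn n), pow wB, pow wB0} with hF
  have key : ∀ π : Equiv.Perm (Fin n), (Avoids123 π ∧ ides π = 1) ↔ π ∈ F := by
    intro π
    constructor
    · rintro ⟨hav, hid⟩
      obtain ⟨w, rfl, hcase⟩ := struct_main hn hav hid
      rcases hcase with rfl | ⟨_, rfl⟩ | rfl | rfl | ⟨ho, _⟩ | ⟨ho, _⟩
      · simp [hF, Finset.mem_insert]
      · simp [hF, Finset.mem_insert]
      · simp [hF, Finset.mem_insert]
      · simp [hF, Finset.mem_insert]
      · exact absurd ho (by omega)
      · exact absurd ho (by omega)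
    · intro hmem
      simp only [hF, Finset.mem_insert, Finset.mem_singleton] at hmem
      rcases hmem with rfl | rfl | rfl | rfl
      · exact ⟨pow_avoids hn hrA, pow_ides hn hrA⟩
      · exact ⟨pow_avoids hn (hrAn hn), pow_ides hn (hrAn hn)⟩
      · exact ⟨pow_avoids hn hrB, pow_ides hn hrB⟩
      · exact ⟨pow_avoids hn hrB0, pow_ides hn hrB0⟩
  have e : { π : Equiv.Perm (Fin n) // Avoids123 π ∧ ides π = 1 } ≃ {π // π ∈ F} :=
    Equiv.subtypeEquivRight key
  rw [Nat.card_congr e, Nat.card_eq_fintype_card, Fintype.card_coe]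
  have nAAn : pow wA (n := n) ≠ pow (wAn n) :=
    pow_ne hn hrA (hrAn hn) (i0 := n) (by omega) (by omega) (by simp [wA, wAn]; omega)
  have nAB : pow wA (n := n) ≠ pow wB :=
    pow_ne hn hrA hrB (i0 := 1) (by omega) (by omega) (by simp [wA, wB])
  have nAB0 : pow wA (n := n) ≠ pow wB0 :=
    pow_ne hn hrA hrB0 (i0 := 2) (by omega) (by omega) (by simp [wA, wB0])
  have nAnB : pow (wAn n) (n := n) ≠ pow wB :=
    pow_ne hn (hrAn hn) hrB (i0 := 1) (by omega) (by omega) (by simp [wAn, wB]; omega)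
  have nAnB0 : pow (wAn n) (n := n) ≠ pow wB0 :=
    pow_ne hn (hrAn hn) hrB0 (i0 := 2) (by omega) (by omega) (by simp [wAn, wB0])
  have nBB0 : pow wB (n := n) ≠ pow wB0 :=
    pow_ne hn hrB hrB0 (i0 := 1) (by omega) (by omega) (by simp [wB, wB0])
  rw [hF]
  rw [Finset.card_insert_of_notMem (by
      simp only [Finset.mem_insert, Finset.mem_singleton]
      push_neg
      exact ⟨nAAn, nAB, nAB0⟩),
    Finset.card_insert_of_notMem (by
      simp only [Finset.mem_insert, Finset.mem_singleton]
      push_neg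
      exact ⟨nAnB, nAnB0⟩),
    Finset.card_insert_of_notMem (by
      simp only [Finset.mem_singleton]
      exact nBB0),
    Finset.card_singleton]

end main

/-- For `n ≥ 3`, the number of permutations in `S_n` avoiding `123`
as a consecutive pattern with `ides(π) = 1` is `4` if `n` is odd and `5` if `n` is even. -/
theorem count_avoids123_ides_one {n : ℕ} (hn : 3 ≤ n) :
    Nat.card { π : Equiv.Perm (Fin n) // Avoids123 π ∧ ides π = 1 } =
      if Odd n then 4 else 5 := by
  rcases Nat.mod_two_eq_zero_or_one n with hpar | hpar
  · rw [if_neg (by rw [Nat.odd_iff]; omega)]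
    exact count_even hn hpar
  · rw [if_pos (by rw [Nat.odd_iff]; exact hpar)]
    exact count_odd hn hpar
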